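/- Suppose there exists c > 0 such that n·α_n ≤ c for all n ≥ 1. Then the covariance recursion converges at the optimal rate: there exists a constant C > 0 such that Σ_n ≼ (C/n)·R for all n ≥ 1, where ≼ denotes the Loewner order (i.e., (C/n)·R − Σ_n is positive semidefinite). -/

import Mathlib

open Matrix Finset

namespace RPF7

variable {d : ℕ}

lemma psd_smul {A : Matrix (Fin d) (Fin d) ℝ} (hA : A.PosSemidef) {r : ℝ} (hr : 0 ≤ r) :
    (r • A).PosSemidef := by
  refine ⟨?_, fun x => ?_⟩
  · rw [Matrix.IsHermitian, Matrix.conjTranspose_smul, hA.1, star_trivial]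
  · exact (hA.smul hr).2 x

lemma pd_smul {A : Matrix (Fin d) (Fin d) ℝ} (hA : A.PosDef) {r : ℝ} (hr : 0 < r) :
    (r • A).PosDef := by
  refine ⟨?_, fun x hx => ?_⟩
  · rw [Matrix.IsHermitian, Matrix.conjTranspose_smul, hA.1, star_trivial]
  · exact (hA.smul hr).2 hx

open scoped MatrixOrder in
/-- Loewner inverse antitonicity for positive definite real matrices. -/
lemma inv_sub_inv_psd {A B : Matrix (Fin d) (Fin d) ℝ} (hA : A.PosDef) (hB : B.PosDef)
    (h : (A - B).PosSemidef) : (B⁻¹ - A⁻¹).PosSemidef := by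
  classical
  set E := CFC.sqrt (A - B) with hEdef
  have hE : E.PosSemidef := Matrix.nonneg_iff_posSemidef.mp (CFC.sqrt_nonneg _)
  have hEE : E * E = A - B := CFC.sqrt_mul_sqrt_self (A - B) (Matrix.nonneg_iff_posSemidef.mpr h)
  have hBi : B⁻¹.PosDef := hB.inv
  have hEsym : Eᴴ = E := hE.1
  set M : Matrix (Fin d) (Fin d) ℝ := 1 + E * B⁻¹ * E with hMdef
  have hM : M.PosDef := by
    have hpsd : (Eᴴ * B⁻¹ * E).PosSemidef := hBi.posSemidef.conjTranspose_mul_mul_same E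
    rw [hEsym] at hpsd
    exact Matrix.PosDef.add_posSemidef Matrix.PosDef.one hpsd
  have hMM : M * M⁻¹ = 1 := Matrix.mul_nonsing_inv _ ((Matrix.isUnit_iff_isUnit_det M).mp hM.isUnit)
  have hBB : B * B⁻¹ = 1 := Matrix.mul_nonsing_inv _ ((Matrix.isUnit_iff_isUnit_det B).mp hB.isUnit)
  have hA' : A = B + E * E := by rw [hEE]; abel
  have step : A * (B⁻¹ * E) = E * M := by
    rw [hA', hMdef, add_mul, mul_add, mul_one, ← Matrix.mul_assoc B, hBB, one_mul]
    noncomm_ring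
  have key : A * (B⁻¹ - B⁻¹ * E * M⁻¹ * E * B⁻¹) = 1 := by
    calc A * (B⁻¹ - B⁻¹ * E * M⁻¹ * E * B⁻¹)
        = A * B⁻¹ - (A * (B⁻¹ * E)) * (M⁻¹ * (E * B⁻¹)) := by noncomm_ring
      _ = A * B⁻¹ - (E * M) * (M⁻¹ * (E * B⁻¹)) := by rw [step]
      _ = A * B⁻¹ - E * ((M * M⁻¹) * (E * B⁻¹)) := by noncomm_ring
      _ = A * B⁻¹ - E * (E * B⁻¹) := by rw [hMM, one_mul]
      _ = (B + E * E) * B⁻¹ - E * (E * B⁻¹) := by rw [← hA']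
      _ = B * B⁻¹ := by noncomm_ring
      _ = 1 := hBB
  have hAinv : A⁻¹ = B⁻¹ - B⁻¹ * E * M⁻¹ * E * B⁻¹ := Matrix.inv_eq_right_inv key
  have hconj : (E * B⁻¹)ᴴ = B⁻¹ * E := by
    rw [Matrix.conjTranspose_mul, hEsym, hBi.1]
  have hrw : B⁻¹ - A⁻¹ = (E * B⁻¹)ᴴ * M⁻¹ * (E * B⁻¹) := by
    rw [hAinv, hconj]; noncomm_ring
  rw [hrw]
  exact hM.inv.posSemidef.conjTranspose_mul_mul_same _

noncomputable def rpfQ (α : ℕ → ℝ) : ℕ → ℝ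
  | 0 => 0
  | n + 1 => (rpfQ α n + 1) / (1 + α (n + 1))

lemma rpfQ_ge (α : ℕ → ℝ) (c : ℝ) (hαnn : ∀ n, 0 ≤ α n) (hc : 0 < c)
    (hαb : ∀ n : ℕ, 1 ≤ n → (n : ℝ) * α n ≤ c) :
    ∀ n : ℕ, 1 ≤ n → (n : ℝ) / (1 + c) ≤ rpfQ α n := by
  have h1c : (0:ℝ) < 1 + c := by linarith
  intro n hn
  induction n, hn using Nat.le_induction with
  | base =>
    have hα1 : α 1 ≤ c := by have := hαb 1 le_rfl; simpa using this
    have hpos : (0:ℝ) < 1 + α 1 := by have := hαnn 1; linarith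
    show (1:ℕ) / ((1:ℝ) + c) ≤ rpfQ α 1
    have : rpfQ α 1 = 1 / (1 + α 1) := by simp [rpfQ]
    rw [this]
    push_cast
    apply div_le_div_of_nonneg_left (by norm_num) hpos (by linarith)
  | succ n hn ih =>
    have hpos : (0:ℝ) < 1 + α (n + 1) := by have := hαnn (n+1); linarith
    have hαn : ((n:ℝ) + 1) * α (n + 1) ≤ c := by
      have := hαb (n+1) (by omega); push_cast at this; linarith
    have hq : rpfQ α (n + 1) = (rpfQ α n + 1) / (1 + α (n + 1)) := rfl
    rw [hq]
    push_cast
    rw [div_le_div_iff₀ h1c hpos]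
    have hcancel : (n:ℝ) / (1 + c) * (1 + c) = (n:ℝ) := div_mul_cancel₀ _ h1c.ne'
    have hmul : (n:ℝ) / (1 + c) * (1 + c) ≤ rpfQ α n * (1 + c) :=
      mul_le_mul_of_nonneg_right ih h1c.le
    nlinarith [hαnn (n+1)]

end RPF7

open RPF7 in
/-- Optimal rate: if `n α_n ≤ c` for all `n ≥ 1`, then the RPF covariance satisfies
`Σ_n ≼ (C/n) R` (Loewner order) for some `C > 0` and all `n ≥ 1`. -/
theorem stmt_7 {d : ℕ} (hd : 1 ≤ d)
    (R S0 : Matrix (Fin d) (Fin d) ℝ) (hR : R.PosDef) (hS0pd : S0.PosDef)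
    (α : ℕ → ℝ) (hα0 : α 0 = 0) (hαnn : ∀ n, 0 ≤ α n)
    (c : ℝ) (hc : 0 < c) (hαb : ∀ n : ℕ, 1 ≤ n → (n : ℝ) * α n ≤ c)
    (S : ℕ → Matrix (Fin d) (Fin d) ℝ) (hS0 : S 0 = S0)
    (hrec : ∀ n, S (n + 1) = (1 + α (n + 1)) • (R * (R + S n)⁻¹ * S n)) :
    ∃ C > 0, ∀ n : ℕ, 1 ≤ n → ((C / (n : ℝ)) • R - S n).PosSemidef := by
  classical
  have hRdet : IsUnit R.det := (Matrix.isUnit_iff_isUnit_det R).mp hR.isUnit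
  have hRiR : R⁻¹ * R = 1 := Matrix.nonsing_inv_mul _ hRdet
  -- invariant: S n is PD and (S n)⁻¹ - (rpfQ α n) • R⁻¹ is PSD
  have hinv : ∀ n, (S n).PosDef ∧ ((S n)⁻¹ - rpfQ α n • R⁻¹).PosSemidef := by
    intro n
    induction n with
    | zero =>
      refine ⟨hS0 ▸ hS0pd, ?_⟩
      have : rpfQ α 0 = 0 := rfl
      rw [this, zero_smul, sub_zero]
      exact (hS0 ▸ hS0pd).inv.posSemidef
    | succ n ih =>
      obtain ⟨hpd, hpsd⟩ := ih
      have ha : 0 ≤ α (n+1) := hαnn _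
      have h1a : (0:ℝ) < 1 + α (n+1) := by linarith
      have hSdet : IsUnit (S n).det := (Matrix.isUnit_iff_isUnit_det _).mp hpd.isUnit
      have hRSpd : (R + S n).PosDef := hR.add hpd
      have hRSdet : IsUnit (R + S n).det := (Matrix.isUnit_iff_isUnit_det _).mp hRSpd.isUnit
      have hSiS : (S n)⁻¹ * (S n) = 1 := Matrix.nonsing_inv_mul _ hSdet
      have hRSi : (R + S n) * (R + S n)⁻¹ = 1 := Matrix.mul_nonsing_inv _ hRSdet
      have hXinv : (R⁻¹ + (S n)⁻¹) * (R * (R + S n)⁻¹ * S n) = 1 := by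
        calc (R⁻¹ + (S n)⁻¹) * (R * (R + S n)⁻¹ * S n)
            = ((R⁻¹ + (S n)⁻¹) * R) * ((R + S n)⁻¹ * S n) := by noncomm_ring
          _ = ((S n)⁻¹ * (R + S n)) * ((R + S n)⁻¹ * S n) := by
                rw [add_mul, Matrix.mul_add, hRiR, hSiS, add_comm]
          _ = (S n)⁻¹ * (((R + S n) * (R + S n)⁻¹) * S n) := by noncomm_ring
          _ = 1 := by rw [hRSi, one_mul, hSiS]
      have hLmul : ((1 + α (n+1))⁻¹ • (R⁻¹ + (S n)⁻¹)) * S (n+1) = 1 := by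
        rw [hrec n, Matrix.smul_mul, Matrix.mul_smul, smul_smul,
          inv_mul_cancel₀ h1a.ne', hXinv, one_smul]
      have hL : ((1 + α (n+1))⁻¹ • (R⁻¹ + (S n)⁻¹)).PosDef :=
        pd_smul (hR.inv.add hpd.inv) (inv_pos.mpr h1a)
      have hSinv : (S (n+1))⁻¹ = (1 + α (n+1))⁻¹ • (R⁻¹ + (S n)⁻¹) :=
        Matrix.inv_eq_left_inv hLmul
      have hS1pd : (S (n+1)).PosDef := by
        have h2 : S (n+1) * ((1 + α (n+1))⁻¹ • (R⁻¹ + (S n)⁻¹)) = 1 :=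
          mul_eq_one_comm.mp hLmul
        have h3 : ((1 + α (n+1))⁻¹ • (R⁻¹ + (S n)⁻¹))⁻¹ = S (n+1) :=
          Matrix.inv_eq_left_inv h2
        rw [← h3]; exact hL.inv
      refine ⟨hS1pd, ?_⟩
      have hq : rpfQ α (n+1) = (1 + α (n+1))⁻¹ * (rpfQ α n + 1) := by
        show (rpfQ α n + 1) / (1 + α (n+1)) = _
        rw [div_eq_inv_mul]
      have hkey : (S (n+1))⁻¹ - rpfQ α (n+1) • R⁻¹
          = (1 + α (n+1))⁻¹ • ((S n)⁻¹ - rpfQ α n • R⁻¹) := by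
        rw [hSinv, hq]; module
      rw [hkey]
      exact psd_smul hpsd (by positivity)
  refine ⟨1 + c, by linarith, fun n hn => ?_⟩
  obtain ⟨hpd, hpsd⟩ := hinv n
  have h1c : (0:ℝ) < 1 + c := by linarith
  have hNpos : (0:ℝ) < (n:ℝ) := by exact_mod_cast hn
  have hq := rpfQ_ge α c hαnn hc hαb n hn
  have hqpos : 0 < rpfQ α n := lt_of_lt_of_le (by positivity) hq
  have hSdet : IsUnit (S n).det := (Matrix.isUnit_iff_isUnit_det _).mp hpd.isUnit
  have hBpd : (rpfQ α n • R⁻¹).PosDef := pd_smul hR.inv hqpos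
  have main : ((rpfQ α n • R⁻¹)⁻¹ - ((S n)⁻¹)⁻¹).PosSemidef :=
    inv_sub_inv_psd hpd.inv hBpd hpsd
  have hAi : ((S n)⁻¹)⁻¹ = S n := Matrix.nonsing_inv_nonsing_inv _ hSdet
  have hBi : (rpfQ α n • R⁻¹)⁻¹ = (rpfQ α n)⁻¹ • R := by
    apply Matrix.inv_eq_right_inv
    rw [Matrix.smul_mul, Matrix.mul_smul, smul_smul, mul_inv_cancel₀ hqpos.ne', hRiR, one_smul]
  rw [hAi, hBi] at main
  have hle : (rpfQ α n)⁻¹ ≤ (1 + c) / (n:ℝ) := by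
    have h1 : (rpfQ α n)⁻¹ ≤ ((n:ℝ) / (1 + c))⁻¹ :=
      inv_anti₀ (by positivity) hq
    rwa [inv_div] at h1
  have hsplit : ((1 + c) / (n:ℝ)) • R - S n
      = ((1 + c) / (n:ℝ) - (rpfQ α n)⁻¹) • R + ((rpfQ α n)⁻¹ • R - S n) := by
    module
  rw [hsplit]
  exact (psd_smul hR.posSemidef (by linarith)).add main
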